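/- There exist a labelled transition system and a symmetric relation R on its states such that R satisfies condition (T) of branching bisimulations and R relates divergent states to divergent states only, yet R relates two states that are not divergence-preserving branching bisimilar. Hence a symmetric relation satisfying (T) that only relates divergent states to divergent states is not necessarily included in a divergence-preserving branching bisimulation. -/
import Mathlib


/-- The internal-step relation: `s →τ s'`. -/
def TauStep {S Act : Type*} (tr : S → Act → S → Prop) (τ : Act) : S → S → Prop :=
  fun x y => tr x τ y

/-- `⇒` : the reflexive-transitive closure of `→τ`. -/
def TauReach {S Act : Type*} (tr : S → Act → S → Prop) (τ : Act) : S → S → Prop :=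
  Relation.ReflTransGen (TauStep tr τ)

/-- `→τ⁺` : the transitive closure of `→τ`. -/
def TauPlus {S Act : Type*} (tr : S → Act → S → Prop) (τ : Act) : S → S → Prop :=
  Relation.TransGen (TauStep tr τ)

/-- `s →(a)̂ s'` : either `s →a s'`, or `a = τ` and `s = s'`. -/
def OptStep {S Act : Type*} (tr : S → Act → S → Prop) (τ : Act)
    (s : S) (a : Act) (s' : S) : Prop :=
  tr s a s' ∨ (a = τ ∧ s = s')

/-- Condition (T) of branching bisimulations. -/
def CondT {S Act : Type*} (tr : S → Act → S → Prop) (τ : Act) (B : S → S → Prop) : Prop :=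
  ∀ s t a s', B s t → tr s a s' →
    ∃ t'' t', TauReach tr τ t t'' ∧ OptStep tr τ t'' a t' ∧ B s t'' ∧ B s' t'

/-- A branching bisimulation: a symmetric relation satisfying condition (T). -/
def IsBranchingBisim {S Act : Type*} (tr : S → Act → S → Prop) (τ : Act)
    (B : S → S → Prop) : Prop :=
  Symmetric B ∧ CondT tr τ B

/-- The divergence condition (D). -/
def CondD {S Act : Type*} (tr : S → Act → S → Prop) (τ : Act) (B : S → S → Prop) : Prop :=
  ∀ s t (sk : ℕ → S), B s t → sk 0 = s → (∀ k, tr (sk k) τ (sk (k + 1))) →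
    (∀ k, B (sk k) t) → ∃ t', TauPlus tr τ t t' ∧ ∃ k, B (sk k) t'

/-- A divergence-preserving branching bisimulation. -/
def IsDPBB {S Act : Type*} (tr : S → Act → S → Prop) (τ : Act) (B : S → S → Prop) : Prop :=
  IsBranchingBisim tr τ B ∧ CondD tr τ B

/-- Divergence-preserving branching bisimilarity `s ⇔Δ t`. -/
def DPBBisimilar {S Act : Type*} (tr : S → Act → S → Prop) (τ : Act) (s t : S) : Prop :=
  ∃ B, IsDPBB tr τ B ∧ B s t

/-- A state is divergent if it admits an infinite sequence of τ-transitions. -/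
def Divergent {S Act : Type*} (tr : S → Act → S → Prop) (τ : Act) (s : S) : Prop :=
  ∃ sk : ℕ → S, sk 0 = s ∧ ∀ k, tr (sk k) τ (sk (k + 1))

inductive CEx : Type
  | s | t | d | u | z
deriving DecidableEq

inductive CTr : CEx → Bool → CEx → Prop
  | ss : CTr .s true .s
  | sd : CTr .s true .d
  | dd : CTr .d true .d
  | sz : CTr .s false .z
  | tu : CTr .t true .u
  | uu : CTr .u true .u
  | tz : CTr .t false .z

def CR : CEx → CEx → Prop := fun x y =>
  (x = .s ∧ y = .t) ∨ (x = .t ∧ y = .s) ∨ (x = .d ∧ y = .u) ∨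
  (x = .u ∧ y = .d) ∨ (x = .z ∧ y = .z)

lemma cplus_u : ∀ x y, Relation.TransGen (TauStep CTr true) x y →
    (x = CEx.t ∨ x = CEx.u) → y = CEx.u := by
  intro x y h
  induction h with
  | single h => rintro (rfl | rfl) <;> cases h <;> rfl
  | tail _ h ih =>
    intro hx
    have := ih hx
    subst this
    cases h; rfl

lemma creach_u : ∀ y, Relation.ReflTransGen (TauStep CTr true) CEx.u y → y = CEx.u := by
  intro y h
  induction h with
  | refl => rfl
  | tail _ h ih => subst ih; cases h; rfl

/-- there are an LTS and a symmetric relation R satisfying condition (T)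
and relating divergent states to divergent states only, such that R relates two states
that are not divergence-preserving branching bisimilar. -/
theorem condT_divergence_respecting_not_sufficient :
    ∃ (S Act : Type) (tr : S → Act → S → Prop) (τ : Act) (R : S → S → Prop),
      Symmetric R ∧ CondT tr τ R ∧
      (∀ u v, R u v → Divergent tr τ u → Divergent tr τ v) ∧
      (∃ s t, R s t ∧ ¬ DPBBisimilar tr τ s t) := by
  refine ⟨CEx, Bool, CTr, true, CR, ?_, ?_, ?_, ?_⟩
  · rintro x y (⟨rfl, rfl⟩ | ⟨rfl, rfl⟩ | ⟨rfl, rfl⟩ | ⟨rfl, rfl⟩ | ⟨rfl, rfl⟩) <;>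
      simp [CR]
  · rintro x y a x' (⟨rfl, rfl⟩ | ⟨rfl, rfl⟩ | ⟨rfl, rfl⟩ | ⟨rfl, rfl⟩ | ⟨rfl, rfl⟩) htr
    · -- x = s, y = t
      cases htr with
      | ss => exact ⟨.t, .t, Relation.ReflTransGen.refl, Or.inr ⟨rfl, rfl⟩,
          Or.inl ⟨rfl, rfl⟩, Or.inl ⟨rfl, rfl⟩⟩
      | sd => exact ⟨.t, .u, Relation.ReflTransGen.refl, Or.inl CTr.tu,
          Or.inl ⟨rfl, rfl⟩, Or.inr (Or.inr (Or.inl ⟨rfl, rfl⟩))⟩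
      | sz => exact ⟨.t, .z, Relation.ReflTransGen.refl, Or.inl CTr.tz,
          Or.inl ⟨rfl, rfl⟩, Or.inr (Or.inr (Or.inr (Or.inr ⟨rfl, rfl⟩)))⟩
    · -- x = t, y = s
      cases htr with
      | tu => exact ⟨.s, .d, Relation.ReflTransGen.refl, Or.inl CTr.sd,
          Or.inr (Or.inl ⟨rfl, rfl⟩), Or.inr (Or.inr (Or.inr (Or.inl ⟨rfl, rfl⟩)))⟩
      | tz => exact ⟨.s, .z, Relation.ReflTransGen.refl, Or.inl CTr.sz,
          Or.inr (Or.inl ⟨rfl, rfl⟩), Or.inr (Or.inr (Or.inr (Or.inr ⟨rfl, rfl⟩)))⟩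
    · -- x = d, y = u
      cases htr with
      | dd => exact ⟨.u, .u, Relation.ReflTransGen.refl, Or.inl CTr.uu,
          Or.inr (Or.inr (Or.inl ⟨rfl, rfl⟩)), Or.inr (Or.inr (Or.inl ⟨rfl, rfl⟩))⟩
    · -- x = u, y = d
      cases htr with
      | uu => exact ⟨.d, .d, Relation.ReflTransGen.refl, Or.inl CTr.dd,
          Or.inr (Or.inr (Or.inr (Or.inl ⟨rfl, rfl⟩))),
          Or.inr (Or.inr (Or.inr (Or.inl ⟨rfl, rfl⟩)))⟩
    · cases htr
  · rintro x y (⟨rfl, rfl⟩ | ⟨rfl, rfl⟩ | ⟨rfl, rfl⟩ | ⟨rfl, rfl⟩ | ⟨rfl, rfl⟩) hd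
    · exact ⟨fun k => match k with | 0 => .t | _+1 => .u, rfl,
        fun k => match k with | 0 => CTr.tu | _+1 => CTr.uu⟩
    · exact ⟨fun _ => .s, rfl, fun _ => CTr.ss⟩
    · exact ⟨fun _ => .u, rfl, fun _ => CTr.uu⟩
    · exact ⟨fun _ => .d, rfl, fun _ => CTr.dd⟩
    · exact hd
  · refine ⟨.s, .t, Or.inl ⟨rfl, rfl⟩, ?_⟩
    rintro ⟨B, ⟨⟨hsym, hT⟩, hD⟩, hst⟩
    obtain ⟨t', htp, k, hk⟩ := hD .s .t (fun _ => .s) hst rfl (fun _ => CTr.ss) (fun _ => hst)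
    have ht' : t' = CEx.u := cplus_u _ _ htp (Or.inl rfl)
    subst ht'
    obtain ⟨t'', t2, hreach, hopt, _, _⟩ := hT .s .u false .z hk CTr.sz
    have : t'' = CEx.u := creach_u _ hreach
    subst this
    rcases hopt with h | ⟨h, _⟩
    · cases h
    · exact Bool.noConfusion h
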